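/- Let (V, ⟨·,·⟩, A) be a Jacobi–Ricci commuting model whose Ricci operator ρ is complex diagonalizable with spectrum of the complexification equal to {a₁ + a₂·i, a₁ − a₂·i} where a₂ > 0. Set J := a₂⁻¹·(ρ − a₁·id). Then: J is self-adjoint, i.e. ⟨Jx, y⟩ = ⟨x, Jy⟩ for all x, y; J² = −id; ρ = a₁·id + a₂·J; and A(Jx,y,z,w) = A(x,Jy,z,w) = A(x,y,Jz,w) = A(x,y,z,Jw) for all x, y, z, w ∈ V. -/

import Mathlib

open TensorProduct

/-- `f : W⁴ → ℝ` is multilinear over `ℝ` in each of its four slots. -/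
def IsML {W : Type*} [AddCommGroup W] [Module ℝ W] (f : W → W → W → W → ℝ) : Prop :=
  (∀ x x' y z w, f (x + x') y z w = f x y z w + f x' y z w) ∧
  (∀ (c : ℝ) x y z w, f (c • x) y z w = c * f x y z w) ∧
  (∀ x y y' z w, f x (y + y') z w = f x y z w + f x y' z w) ∧
  (∀ (c : ℝ) x y z w, f x (c • y) z w = c * f x y z w) ∧
  (∀ x y z z' w, f x y (z + z') w = f x y z w + f x y z' w) ∧
  (∀ (c : ℝ) x y z w, f x y (c • z) w = c * f x y z w) ∧
  (∀ x y z w w', f x y z (w + w') = f x y z w + f x y z w') ∧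
  (∀ (c : ℝ) x y z w, f x y z (c • w) = c * f x y z w)

/-- The symmetries of the Riemann curvature tensor. -/
def IsCurvSym {W : Type*} [AddCommGroup W] [Module ℝ W] (f : W → W → W → W → ℝ) : Prop :=
  (∀ x y z w, f x y z w = - f y x z w) ∧
  (∀ x y z w, f x y z w = f z w x y) ∧
  (∀ x y z w, f x y z w + f y z x w + f z x y w = 0)

/-- An algebraic curvature tensor: a multilinear map with the curvature symmetries. -/
def IsACT {W : Type*} [AddCommGroup W] [Module ℝ W] (f : W → W → W → W → ℝ) : Prop :=
  IsML f ∧ IsCurvSym f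

/-- The defining value of `⟨ρ x, y⟩`: the trace of `z ↦ ½𝓡(z,x)y + ½𝓡(z,y)x`,
where `R` is the (curried) curvature operator. -/
noncomputable def ricciForm {V : Type*} [AddCommGroup V] [Module ℝ V]
    (R : V →ₗ[ℝ] V →ₗ[ℝ] V →ₗ[ℝ] V) (x y : V) : ℝ :=
  LinearMap.trace ℝ V
    (((1 : ℝ) / 2) • ((R.flip x).flip y) + ((1 : ℝ) / 2) • ((R.flip y).flip x))

/-- The Jacobi--Ricci commuting identity of Lemma 1 (3). -/
def JRComm {V : Type*} [AddCommGroup V] [Module ℝ V]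
    (A : V → V → V → V → ℝ) (ρ : V →ₗ[ℝ] V) : Prop :=
  ∀ v₁ v₂ v₃ v₄ : V,
    A (ρ v₁) v₂ v₃ v₄ = A v₁ (ρ v₂) v₃ v₄ ∧
    A v₁ (ρ v₂) v₃ v₄ = A v₁ v₂ (ρ v₃) v₄ ∧
    A v₁ v₂ (ρ v₃) v₄ = A v₁ v₂ v₃ (ρ v₄)

/-- `f` is complex diagonalizable: the complexification of `f` acting on `ℂ ⊗ V` is
diagonalizable, i.e. the eigenspaces of the complexified operator span. -/
def IsCDiagonalizable {V : Type*} [AddCommGroup V] [Module ℝ V] (f : V →ₗ[ℝ] V) : Prop :=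
  (⨆ μ : ℂ, Module.End.eigenspace (LinearMap.baseChange ℂ f) μ) = ⊤

private lemma quad_aux {V : Type*} [AddCommGroup V] [Module ℝ V] [FiniteDimensional ℝ V]
    (ρ : V →ₗ[ℝ] V)
    (hdiag : (⨆ μ : ℂ, Module.End.eigenspace (LinearMap.baseChange ℂ ρ) μ) = ⊤)
    (a₁ a₂ : ℝ)
    (hspec : spectrum ℂ (LinearMap.baseChange ℂ ρ) =
      {(a₁ : ℂ) + (a₂ : ℂ) * Complex.I, (a₁ : ℂ) - (a₂ : ℂ) * Complex.I}) :
    ∀ v : V, ρ (ρ v) = (2*a₁) • ρ v - (a₁^2+a₂^2) • v := by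
  set T := LinearMap.baseChange ℂ ρ with hT
  set lam : ℂ := (a₁ : ℂ) + (a₂ : ℂ) * Complex.I with hlam
  set lam' : ℂ := (a₁ : ℂ) - (a₂ : ℂ) * Complex.I with hlam'
  set P : TensorProduct ℝ ℂ V →ₗ[ℂ] TensorProduct ℝ ℂ V :=
    (T - lam • LinearMap.id) ∘ₗ (T - lam' • LinearMap.id) with hP
  have hPz : ∀ x, P x = 0 := by
    intro x
    have hx : x ∈ (⊤ : Submodule ℂ (TensorProduct ℝ ℂ V)) := trivial
    rw [← hdiag] at hx
    have hle : (⨆ μ : ℂ, Module.End.eigenspace T μ) ≤ LinearMap.ker P := by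
      apply iSup_le
      intro μ v hv
      rw [Module.End.mem_eigenspace_iff] at hv
      have hPv : P v = ((μ - lam) * (μ - lam')) • v := by
        simp only [hP, LinearMap.comp_apply, LinearMap.sub_apply, LinearMap.smul_apply,
          LinearMap.id_apply, hv, map_sub, map_smul, smul_smul]
        module
      by_cases h1 : μ = lam
      · simp [LinearMap.mem_ker, hPv, h1]
      by_cases h2 : μ = lam'
      · simp [LinearMap.mem_ker, hPv, h2]
      · have hne : ¬ Module.End.HasEigenvalue T μ := by
          intro h
          have := h.mem_spectrum
          rw [hspec] at this
          rcases this with h | h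
          · exact h1 h
          · exact h2 h
        have hbot : Module.End.eigenspace T μ = ⊥ := not_not.mp hne
        have hv0 : v = 0 := by
          have : v ∈ Module.End.eigenspace T μ := Module.End.mem_eigenspace_iff.mpr hv
          rw [hbot] at this; simpa using this
        simp [LinearMap.mem_ker, hPv, hv0]
    exact hle hx
  intro v
  have h0 := hPz ((1:ℂ) ⊗ₜ[ℝ] v)
  have hlampr : lam * lam' = ((a₁^2 + a₂^2 : ℝ) : ℂ) := by
    rw [hlam, hlam']; push_cast
    ring_nf
    rw [Complex.I_sq]; ring
  have hlamsum : lam + lam' = ((2*a₁ : ℝ) : ℂ) := by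
    rw [hlam, hlam']; push_cast; ring
  have hexp : P ((1:ℂ) ⊗ₜ[ℝ] v) =
      (1:ℂ) ⊗ₜ[ℝ] (ρ (ρ v)) - (lam + lam') • ((1:ℂ) ⊗ₜ[ℝ] (ρ v))
        + (lam * lam') • ((1:ℂ) ⊗ₜ[ℝ] v) := by
    simp only [hP, LinearMap.comp_apply, LinearMap.sub_apply, LinearMap.smul_apply,
      LinearMap.id_apply, map_sub, map_smul, hT, LinearMap.baseChange_tmul]
    module
  rw [hexp, hlampr, hlamsum] at h0
  have h1 : (1:ℂ) ⊗ₜ[ℝ] (ρ (ρ v) - (2*a₁) • ρ v + (a₁^2+a₂^2) • v) = 0 := by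
    rw [← h0]
    simp only [tmul_add, tmul_sub, tmul_smul, ← Complex.coe_algebraMap, algebraMap_smul]
  have h2 : ρ (ρ v) - (2*a₁) • ρ v + (a₁^2+a₂^2) • v = 0 := by
    have := congrArg (fun t => (TensorProduct.lid ℝ V) (LinearMap.rTensor V Complex.reLm t)) h1
    simpa using this
  linear_combination (norm := module) h2

theorem statement4
    {V : Type*} [AddCommGroup V] [Module ℝ V] [FiniteDimensional ℝ V]
    (B : LinearMap.BilinForm ℝ V)
    (hBsymm : ∀ x y, B x y = B y x)
    (hBnondeg : ∀ x, (∀ y, B x y = 0) → x = 0)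
    (A : V → V → V → V → ℝ) (hA : IsACT A)
    (R : V →ₗ[ℝ] V →ₗ[ℝ] V →ₗ[ℝ] V)
    (hR : ∀ x y z w, B (R x y z) w = A x y z w)
    (ρ : V →ₗ[ℝ] V)
    (hρ : ∀ x y, B (ρ x) y = ricciForm R x y)
    (hJR : JRComm A ρ)
    (hdiag : IsCDiagonalizable ρ)
    (a₁ a₂ : ℝ) (ha₂ : 0 < a₂)
    (hspec : spectrum ℂ (LinearMap.baseChange ℂ ρ) =
      {(a₁ : ℂ) + (a₂ : ℂ) * Complex.I, (a₁ : ℂ) - (a₂ : ℂ) * Complex.I})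
    (J : V →ₗ[ℝ] V) (hJ : J = a₂⁻¹ • (ρ - a₁ • LinearMap.id)) :
    (∀ x y, B (J x) y = B x (J y)) ∧
    (J ∘ₗ J = - LinearMap.id) ∧
    (ρ = a₁ • LinearMap.id + a₂ • J) ∧
    (∀ x y z w : V,
      A (J x) y z w = A x (J y) z w ∧
      A x (J y) z w = A x y (J z) w ∧
      A x y (J z) w = A x y z (J w)) := by
  
  have ha₂' : a₂ ≠ 0 := ne_of_gt ha₂
  have hquad := quad_aux ρ hdiag a₁ a₂ hspec
  have hρsa : ∀ x y, B (ρ x) y = B x (ρ y) := by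
    intro x y
    have h1 : ricciForm R x y = ricciForm R y x := by unfold ricciForm; rw [add_comm]
    rw [hρ, h1, ← hρ, hBsymm]
  have hJsa : ∀ x y, B (J x) y = B x (J y) := by
    intro x y
    simp only [hJ, LinearMap.smul_apply, LinearMap.sub_apply, LinearMap.id_apply,
      map_smul, map_sub, smul_eq_mul, LinearMap.smul_apply]
    rw [hρsa]
  have hJJ : J ∘ₗ J = - LinearMap.id := by
    ext v
    have hq := hquad v
    simp only [hJ, LinearMap.comp_apply, LinearMap.smul_apply, LinearMap.sub_apply,
      LinearMap.id_apply, map_smul, map_sub, LinearMap.neg_apply, hq]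
    match_scalars <;> field_simp <;> ring
  have hρeq : ρ = a₁ • LinearMap.id + a₂ • J := by
    ext v
    simp only [hJ, LinearMap.add_apply, LinearMap.smul_apply, LinearMap.sub_apply,
      LinearMap.id_apply, smul_sub, smul_smul]
    match_scalars <;> field_simp <;> ring
  obtain ⟨⟨ad1, sm1, ad2, sm2, ad3, sm3, ad4, sm4⟩, _⟩ := hA
  have hJv : ∀ x : V, J x = a₂⁻¹ • ρ x + (-(a₂⁻¹*a₁)) • x := by
    intro x
    simp only [hJ, LinearMap.smul_apply, LinearMap.sub_apply, LinearMap.id_apply]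
    module
  refine ⟨hJsa, hJJ, hρeq, fun x y z w => ?_⟩
  have e1 : A (J x) y z w = a₂⁻¹ * A (ρ x) y z w + (-(a₂⁻¹*a₁)) * A x y z w := by
    rw [hJv, ad1, sm1, sm1]
  have e2 : A x (J y) z w = a₂⁻¹ * A x (ρ y) z w + (-(a₂⁻¹*a₁)) * A x y z w := by
    rw [hJv, ad2, sm2, sm2]
  have e3 : A x y (J z) w = a₂⁻¹ * A x y (ρ z) w + (-(a₂⁻¹*a₁)) * A x y z w := by
    rw [hJv, ad3, sm3, sm3]
  have e4 : A x y z (J w) = a₂⁻¹ * A x y z (ρ w) + (-(a₂⁻¹*a₁)) * A x y z w := by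
    rw [hJv, ad4, sm4, sm4]
  obtain ⟨c1, c2, c3⟩ := hJR x y z w
  exact ⟨by rw [e1, e2, c1], by rw [e2, e3, c2], by rw [e3, e4, c3]⟩
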